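/- Let d, N be natural numbers with 1 ≤ N ≤ d, let w ∈ [0,1], and let A and B be d×d complex Hermitian matrices, each positive semidefinite with all eigenvalues at most 1 and with trace A = trace B = N. Then for every k with 1 ≤ k ≤ d−1, the sum of the k largest eigenvalues (with multiplicity) of w·A + (1−w)·B is at least N − w·(N − (sum of the k largest eigenvalues of A)) − (1−w)·min(N, d−k). -/

import Mathlib

open scoped ComplexOrder

/-- The sum of the `k` largest entries of `x : Fin d → ℝ`: the supremum over all
`k`-element index sets of the sum of the corresponding entries. -/
noncomputable def sumKLargest {d : ℕ} (k : ℕ) (x : Fin d → ℝ) : ℝ :=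
  sSup { y : ℝ | ∃ s : Finset (Fin d), s.card = k ∧ y = ∑ i ∈ s, x i }

open Matrix

section Aux


lemma exists_top {d k : ℕ} (hk : k ≤ d) (x : Fin d → ℝ) :
    ∃ s : Finset (Fin d), s.card = k ∧ ∀ i ∈ s, ∀ j ∉ s, x j ≤ x i := by
  classical
  let σ := Tuple.sort x
  let s : Finset (Fin d) :=
    (Finset.univ.filter fun i : Fin d => d - k ≤ (i : ℕ)).image σ
  have hmem : ∀ i, i ∈ s ↔ d - k ≤ ((σ.symm i : Fin d) : ℕ) := by
    intro i
    simp only [s, Finset.mem_image, Finset.mem_filter, Finset.mem_univ, true_and]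
    constructor
    · rintro ⟨a, ha, rfl⟩; simpa using ha
    · intro h; exact ⟨σ.symm i, h, by simp⟩
  have hcardf : (Finset.univ.filter fun i : Fin d => d - k ≤ (i : ℕ)).card = k := by
    rcases Nat.eq_zero_or_pos k with rfl | hkpos
    · simp only [Nat.sub_zero, Finset.card_eq_zero, Finset.filter_eq_empty_iff]
      intro i _; omega
    · have hd : 0 < d := lt_of_lt_of_le hkpos hk
      have : (Finset.univ.filter fun i : Fin d => d - k ≤ (i : ℕ))
          = Finset.Ici (⟨d - k, by omega⟩ : Fin d) := by
        ext i; simp [Finset.mem_Ici, Fin.le_def]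
      rw [this, Fin.card_Ici]; simp only [Fin.val_mk]; omega
  refine ⟨s, ?_, ?_⟩
  · rw [Finset.card_image_of_injective _ σ.injective, hcardf]
  · intro i hi j hj
    rw [hmem] at hi hj
    push_neg at hj
    have hmono := Tuple.monotone_sort x
    have h1 : x j = (x ∘ σ) (σ.symm j) := by simp
    have h2 : x i = (x ∘ σ) (σ.symm i) := by simp
    rw [h1, h2]
    exact hmono (Fin.le_def.mpr (by omega))


lemma weighted_le_top {d k : ℕ} (hk : 1 ≤ k) (x : Fin d → ℝ) (s : Finset (Fin d))
    (hs : s.card = k) (htop : ∀ i ∈ s, ∀ j ∉ s, x j ≤ x i)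
    (t : Fin d → ℝ) (ht0 : ∀ i, 0 ≤ t i) (ht1 : ∀ i, t i ≤ 1)
    (hts : ∑ i, t i = k) : ∑ i, x i * t i ≤ ∑ i ∈ s, x i := by
  classical
  have hsne : s.Nonempty := Finset.card_pos.mp (by omega)
  set m := s.inf' hsne x with hm
  have hms : ∀ i ∈ s, m ≤ x i := fun i hi => Finset.inf'_le x hi
  have hout : ∀ j ∉ s, x j ≤ m := fun j hj =>
    Finset.le_inf' hsne x (fun i hi => htop i hi j hj)
  calc ∑ i, x i * t i = ∑ i ∈ s, x i * t i + ∑ i ∈ sᶜ, x i * t i :=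
        (Finset.sum_add_sum_compl s _).symm
    _ ≤ ∑ i ∈ s, (x i + m * (t i - 1)) + ∑ i ∈ sᶜ, m * t i := by
        refine add_le_add (Finset.sum_le_sum fun i hi => ?_)
          (Finset.sum_le_sum fun j hj => ?_)
        · nlinarith [hms i hi, ht1 i]
        · exact mul_le_mul_of_nonneg_right (hout j (Finset.mem_compl.mp hj)) (ht0 j)
    _ = ∑ i ∈ s, x i + m * ((∑ i ∈ s, t i + ∑ i ∈ sᶜ, t i) - s.card) := by
        rw [Finset.sum_add_distrib, ← Finset.mul_sum, ← Finset.mul_sum,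
          Finset.sum_sub_distrib]
        simp [Finset.sum_const]
        ring
    _ = ∑ i ∈ s, x i := by rw [Finset.sum_add_sum_compl s t, hts, hs]; simp

lemma bdd_sumK {d k : ℕ} (x : Fin d → ℝ) :
    BddAbove { y : ℝ | ∃ s : Finset (Fin d), s.card = k ∧ y = ∑ i ∈ s, x i } := by
  apply Set.Finite.bddAbove
  apply Set.Finite.subset (Set.finite_range (fun s : Finset (Fin d) => ∑ i ∈ s, x i))
  rintro y ⟨s, _, rfl⟩; exact ⟨s, rfl⟩

lemma le_sumKLargest {d k : ℕ} (x : Fin d → ℝ) (s : Finset (Fin d)) (hs : s.card = k) :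
    ∑ i ∈ s, x i ≤ sumKLargest k x :=
  le_csSup (bdd_sumK x) ⟨s, hs, rfl⟩

lemma sumKLargest_le_top {d k : ℕ} (hk : 1 ≤ k) (x : Fin d → ℝ) (s : Finset (Fin d))
    (hs : s.card = k) (htop : ∀ i ∈ s, ∀ j ∉ s, x j ≤ x i) :
    sumKLargest k x ≤ ∑ i ∈ s, x i := by
  classical
  refine csSup_le (Set.nonempty_of_mem (show _ ∈ _ from ⟨s, hs, rfl⟩)) ?_
  rintro y ⟨s', hs', rfl⟩
  have := weighted_le_top hk x s hs htop (fun i => if i ∈ s' then 1 else 0)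
    (fun i => by positivity) (fun i => by split <;> norm_num)
    (by rw [Finset.sum_boole]; simp [hs'])
  simpa [mul_ite, Finset.sum_ite_mem] using this


-- diag entries of a Coleman matrix
lemma diag_re_nonneg {d : ℕ} {M : Matrix (Fin d) (Fin d) ℂ} (hM : M.PosSemidef) (i : Fin d) :
    0 ≤ (M i i).re ∧ (M i i).im = 0 := by
  have h : 0 ≤ M i i := hM.diag_nonneg
  rw [Complex.le_def] at h
  exact ⟨by simpa using h.1, by simpa using h.2.symm⟩

end Aux

/-- lower bound on the sum of the `k` largest eigenvalues of
`w·A + (1−w)·B` where `A`, `B` are Hermitian, satisfy the Coleman conditions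
(`0 ≤ A, B ≤ 1`, trace `= N`). -/
theorem sum_k_largest_eigenvalues_convex_comb_lower_bound
    (d N : ℕ) (hN : 1 ≤ N) (hNd : N ≤ d) (w : ℝ) (hw : w ∈ Set.Icc (0 : ℝ) 1)
    (A B : Matrix (Fin d) (Fin d) ℂ)
    (hA : A.PosSemidef) (hA1 : (1 - A).PosSemidef) (htrA : A.trace = (N : ℂ))
    (hB : B.PosSemidef) (hB1 : (1 - B).PosSemidef) (htrB : B.trace = (N : ℂ))
    (hγ : (w • A + (1 - w) • B).IsHermitian) :
    ∀ k : ℕ, 1 ≤ k → k ≤ d - 1 →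
      sumKLargest k hγ.eigenvalues ≥
        (N : ℝ) - w * ((N : ℝ) - sumKLargest k hA.isHermitian.eigenvalues)
          - (1 - w) * min (N : ℝ) ((d : ℝ) - (k : ℝ)) := by
  intro k hk1 hkd
  classical
  have hd1 : 1 ≤ d := le_trans hN hNd
  have hkd' : k ≤ d := by omega
  set γ : Matrix (Fin d) (Fin d) ℂ := w • A + (1 - w) • B with hγdef
  set lA : Fin d → ℝ := hA.isHermitian.eigenvalues with hlA
  set lG : Fin d → ℝ := hγ.eigenvalues with hlG
  obtain ⟨s, hs, hstop⟩ := exists_top hkd' lA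
  obtain ⟨sg, hsg, hsgtop⟩ := exists_top hkd' lG
  set U : Matrix (Fin d) (Fin d) ℂ := (hA.isHermitian.eigenvectorUnitary : Matrix (Fin d) (Fin d) ℂ) with hU
  set V : Matrix (Fin d) (Fin d) ℂ := (hγ.eigenvectorUnitary : Matrix (Fin d) (Fin d) ℂ) with hV
  have hUU : star U * U = 1 := Matrix.mem_unitaryGroup_iff'.mp hA.isHermitian.eigenvectorUnitary.2
  have hUU' : U * star U = 1 := Matrix.mem_unitaryGroup_iff.mp hA.isHermitian.eigenvectorUnitary.2
  have hVV : star V * V = 1 := Matrix.mem_unitaryGroup_iff'.mp hγ.eigenvectorUnitary.2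
  have hVV' : V * star V = 1 := Matrix.mem_unitaryGroup_iff.mp hγ.eigenvectorUnitary.2
  set ds : Fin d → ℂ := fun i => if i ∈ s then 1 else 0 with hds
  set P : Matrix (Fin d) (Fin d) ℂ := U * diagonal ds * star U with hP
  -- P is Coleman (rank-k projection)
  have hdsps : (diagonal ds).PosSemidef := by
    refine posSemidef_diagonal_iff.mpr fun i => ?_
    dsimp [ds]; split <;> simp
  have hPps : P.PosSemidef := by
    have := hdsps.mul_mul_conjTranspose_same U
    simpa [Matrix.star_eq_conjTranspose, hP] using this
  have hPone : 1 - P = U * diagonal (fun i => 1 - ds i) * star U := by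
    have : diagonal (fun i => 1 - ds i) = 1 - diagonal ds := by
      rw [← diagonal_one, diagonal_sub]
    rw [this, Matrix.mul_sub, Matrix.mul_one, Matrix.sub_mul, hUU']
  have hP1ps : (1 - P).PosSemidef := by
    rw [hPone]
    have hps : (diagonal (fun i => 1 - ds i)).PosSemidef := by
      refine posSemidef_diagonal_iff.mpr fun i => ?_
      dsimp [ds]; split <;> simp
    have := hps.mul_mul_conjTranspose_same U
    simpa [Matrix.star_eq_conjTranspose] using this
  -- B' and Q
  set B' : Matrix (Fin d) (Fin d) ℂ := star U * B * U with hB'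
  set Q : Matrix (Fin d) (Fin d) ℂ := star V * P * V with hQ
  have hB'ps : B'.PosSemidef := by
    have := hB.conjTranspose_mul_mul_same U
    simpa [Matrix.star_eq_conjTranspose, hB'] using this
  have hB'1ps : (1 - B').PosSemidef := by
    have h1 : (1 : Matrix (Fin d) (Fin d) ℂ) - B' = star U * (1 - B) * U := by
      rw [Matrix.mul_sub, Matrix.mul_one, Matrix.sub_mul, hUU]
    rw [h1]
    have := hB1.conjTranspose_mul_mul_same U
    simpa [Matrix.star_eq_conjTranspose] using this
  have hQps : Q.PosSemidef := by
    have := hPps.conjTranspose_mul_mul_same V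
    simpa [Matrix.star_eq_conjTranspose, hQ] using this
  have hQ1ps : (1 - Q).PosSemidef := by
    have h1 : (1 : Matrix (Fin d) (Fin d) ℂ) - Q = star V * (1 - P) * V := by
      rw [Matrix.mul_sub, Matrix.mul_one, Matrix.sub_mul, hVV]
    rw [h1]
    have := hP1ps.conjTranspose_mul_mul_same V
    simpa [Matrix.star_eq_conjTranspose] using this
  set b : Fin d → ℝ := fun i => (B' i i).re with hb
  set t : Fin d → ℝ := fun i => (Q i i).re with ht
  have hb0 : ∀ i, 0 ≤ b i := fun i => (diag_re_nonneg hB'ps i).1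
  have hb1 : ∀ i, b i ≤ 1 := by
    intro i
    have := (diag_re_nonneg hB'1ps i).1
    simp only [Matrix.sub_apply, Matrix.one_apply_eq, Complex.sub_re, Complex.one_re] at this
    dsimp [b]; linarith
  have ht0 : ∀ i, 0 ≤ t i := fun i => (diag_re_nonneg hQps i).1
  have ht1 : ∀ i, t i ≤ 1 := by
    intro i
    have := (diag_re_nonneg hQ1ps i).1
    simp only [Matrix.sub_apply, Matrix.one_apply_eq, Complex.sub_re, Complex.one_re] at this
    dsimp [t]; linarith
  -- trace identities
  have htrB' : ∑ i, b i = (N : ℝ) := by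
    have h1 : B'.trace = B.trace := by
      rw [hB', Matrix.trace_mul_cycle, hUU', Matrix.one_mul]
    have h2 : B'.trace = (N : ℂ) := h1.trans htrB
    have h3 : (B'.trace).re = (N : ℝ) := by rw [h2]; simp
    rw [← h3, Matrix.trace, Complex.re_sum]
    rfl
  have htrQ : ∑ i, t i = (k : ℝ) := by
    have h1 : Q.trace = P.trace := by
      rw [hQ, Matrix.trace_mul_cycle, hVV', Matrix.one_mul]
    have h2 : P.trace = (k : ℂ) := by
      rw [hP, Matrix.trace_mul_cycle, hUU, Matrix.one_mul, Matrix.trace_diagonal]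
      simp only [ds, Finset.sum_ite_mem, Finset.univ_inter, Finset.sum_const, hs]
      simp
    have h3 : (Q.trace).re = (k : ℝ) := by rw [h1, h2]; simp
    rw [← h3, Matrix.trace, Complex.re_sum]
    rfl
  -- trace identities for A*P, B*P, γ*P
  have hI2 : (A * P).trace = ∑ i, (lA i : ℂ) * ds i := by
    calc (A * P).trace = ((A * (U * diagonal ds)) * star U).trace := by
          rw [hP]; simp only [Matrix.mul_assoc]
      _ = (star U * (A * (U * diagonal ds))).trace := Matrix.trace_mul_comm _ _
      _ = ((star U * A * U) * diagonal ds).trace := by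
          simp only [Matrix.mul_assoc]
      _ = (diagonal (RCLike.ofReal ∘ lA) * diagonal ds).trace := by
          rw [← hA.isHermitian.conjStarAlgAut_star_eigenvectorUnitary, Unitary.conjStarAlgAut_star_apply]
      _ = ∑ i, (lA i : ℂ) * ds i := by
          simp [Matrix.diagonal_mul_diagonal, Matrix.trace_diagonal, Function.comp]
  have hI3 : (B * P).trace = ∑ i, B' i i * ds i := by
    calc (B * P).trace = ((B * (U * diagonal ds)) * star U).trace := by
          rw [hP]; simp only [Matrix.mul_assoc]
      _ = (star U * (B * (U * diagonal ds))).trace := Matrix.trace_mul_comm _ _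
      _ = (B' * diagonal ds).trace := by
          rw [hB']; simp only [Matrix.mul_assoc]
      _ = ∑ i, B' i i * ds i := by
          simp [Matrix.trace, Matrix.diag, Matrix.mul_diagonal]
  have hI1 : (γ * P).trace = ∑ i, Q i i * (lG i : ℂ) := by
    calc (γ * P).trace
        = (V * diagonal (RCLike.ofReal ∘ lG) * star V * P).trace := by
          conv_lhs => rw [hγ.spectral_theorem, Unitary.conjStarAlgAut_apply]
      _ = ((V * diagonal (RCLike.ofReal ∘ lG)) * (star V * P)).trace := by
          rw [Matrix.mul_assoc]
      _ = ((star V * P) * (V * diagonal (RCLike.ofReal ∘ lG))).trace :=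
          Matrix.trace_mul_comm _ _
      _ = (Q * diagonal (RCLike.ofReal ∘ lG)).trace := by
          rw [hQ]; simp only [Matrix.mul_assoc]
      _ = ∑ i, Q i i * (lG i : ℂ) := by
          simp [Matrix.trace, Matrix.diag, Matrix.mul_diagonal, Function.comp]
  have hI4 : (γ * P).trace = (w : ℂ) * (A * P).trace + ((1 - w : ℝ) : ℂ) * (B * P).trace := by
    rw [hγdef, Matrix.add_mul, Matrix.smul_mul, Matrix.smul_mul, Matrix.trace_add,
      Matrix.trace_smul, Matrix.trace_smul]
    simp [Complex.real_smul]
  -- take real parts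
  have e1 : ((γ * P).trace).re = ∑ i, lG i * t i := by
    rw [hI1, Complex.re_sum]
    refine Finset.sum_congr rfl fun i _ => ?_
    simp [Complex.mul_re, t]
    ring
  have e2 : ((A * P).trace).re = ∑ i ∈ s, lA i := by
    rw [hI2, Complex.re_sum]
    rw [← Finset.sum_filter_add_sum_filter_not Finset.univ (· ∈ s)]
    have : ∀ i ∈ Finset.univ.filter (· ∉ s), ((lA i : ℂ) * ds i).re = 0 := by
      intro i hi
      simp only [Finset.mem_filter] at hi
      simp [ds, hi.2]
    rw [Finset.sum_congr rfl this, Finset.sum_const_zero, add_zero]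
    rw [Finset.filter_mem_eq_inter, Finset.univ_inter]
    refine Finset.sum_congr rfl fun i hi => ?_
    simp [ds, hi]
  have e3 : ((B * P).trace).re = ∑ i ∈ s, b i := by
    rw [hI3, Complex.re_sum]
    rw [← Finset.sum_filter_add_sum_filter_not Finset.univ (· ∈ s)]
    have : ∀ i ∈ Finset.univ.filter (· ∉ s), (B' i i * ds i).re = 0 := by
      intro i hi
      simp only [Finset.mem_filter] at hi
      simp [ds, hi.2]
    rw [Finset.sum_congr rfl this, Finset.sum_const_zero, add_zero]
    rw [Finset.filter_mem_eq_inter, Finset.univ_inter]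
    refine Finset.sum_congr rfl fun i hi => ?_
    simp [ds, hi, b]
  have key : ∑ i, lG i * t i = w * (∑ i ∈ s, lA i) + (1 - w) * (∑ i ∈ s, b i) := by
    have := congrArg Complex.re hI4
    rw [e1] at this
    rw [this, Complex.add_re, Complex.re_ofReal_mul, Complex.re_ofReal_mul, e2, e3]
  -- final chain
  have h5 : ∑ i, lG i * t i ≤ ∑ i ∈ sg, lG i :=
    weighted_le_top hk1 lG sg hsg hsgtop t ht0 ht1 htrQ
  have h6 : ∑ i ∈ sg, lG i ≤ sumKLargest k lG := le_sumKLargest _ _ hsg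
  have h7 : sumKLargest k lA = ∑ i ∈ s, lA i :=
    le_antisymm (sumKLargest_le_top hk1 _ s hs hstop) (le_sumKLargest _ _ hs)
  have h8 : (N : ℝ) - min (N : ℝ) ((d : ℝ) - (k : ℝ)) ≤ ∑ i ∈ s, b i := by
    have hsplit : ∑ i ∈ s, b i + ∑ i ∈ sᶜ, b i = (N : ℝ) := by
      rw [Finset.sum_add_sum_compl]; exact htrB'
    have hle1 : ∑ i ∈ sᶜ, b i ≤ ((d : ℝ) - (k : ℝ)) := by
      have := Finset.sum_le_card_nsmul sᶜ b 1 (fun i _ => hb1 i)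
      rw [Finset.card_compl, Fintype.card_fin, hs] at this
      have hcast : ((d - k : ℕ) : ℝ) = (d : ℝ) - (k : ℝ) := by
        push_cast [Nat.cast_sub hkd']; ring
      simpa [nsmul_eq_mul, hcast] using this
    have hle2 : ∑ i ∈ sᶜ, b i ≤ (N : ℝ) := by
      have h0 : 0 ≤ ∑ i ∈ s, b i := Finset.sum_nonneg fun i _ => hb0 i
      linarith
    have := le_min hle2 hle1
    linarith
  have h1w : (0 : ℝ) ≤ 1 - w := by have := hw.2; linarith
  have h9 := mul_le_mul_of_nonneg_left h8 h1w
  rw [ge_iff_le, h7]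
  linarith [key, h5, h6, h9]
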